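/- arXiv:2108.06120 — 6 statements merged into one kernel-verified Lean document; each statement's English description precedes it below -/
import Mathlib

section
/- (Lemma 1, second part) In the IRS-aided wireless-powered MEC system with NOMA offloading, allowing a different IRS beamforming vector in each of the K offloading sub-slots does not improve the optimal computation rate over a single common offloading beamforming vector: R_NOMA^2 = R_NOMA^3. -/
open Finset

/-- Effective channel power gain of device `k` under IRS beamforming vector `v`. -/
noncomputable def gain {K N : ℕ} (h : Fin K → ℂ) (q : Fin K → Fin N → ℂ)
    (k : Fin K) (v : Fin N → ℂ) : ℝ :=
  ‖(starRingEnd ℂ) (h k) + ∑ n, (starRingEnd ℂ) (q k n) * v n‖ ^ 2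

/-- Optimal computation rate of NOMA offloading with separate IRS beamforming vectors for
DL WPT and UL offloading (Case 2). -/
noncomputable def RNOMA2 {K N : ℕ} (h : Fin K → ℂ) (q : Fin K → Fin N → ℂ)
    (B T C γ η P σ2 : ℝ) : ℝ :=
  sSup {r : ℝ | ∃ (v₀ v₁ : Fin N → ℂ) (τ₀ τ₁ : ℝ) (p f : Fin K → ℝ),
    (∀ n, ‖v₀ n‖ = 1) ∧ (∀ n, ‖v₁ n‖ = 1) ∧ 0 ≤ τ₀ ∧ 0 ≤ τ₁ ∧
    (∀ k, 0 ≤ p k) ∧ (∀ k, 0 ≤ f k) ∧ τ₀ + τ₁ ≤ T ∧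
    (∀ k, τ₁ * p k + T * γ * f k ^ 3 ≤ τ₀ * η * P * gain h q k v₀) ∧
    r = B * τ₁ * Real.logb 2 (1 + (∑ k, p k * gain h q k v₁) / σ2) + ∑ k, T * f k / C}

/-- Optimal computation rate of NOMA offloading with a possibly different IRS beamforming
vector in each of the `K` offloading sub-slots (Case 3). -/
noncomputable def RNOMA3 {K N : ℕ} (h : Fin K → ℂ) (q : Fin K → Fin N → ℂ)
    (B T C γ η P σ2 : ℝ) : ℝ :=
  sSup {r : ℝ | ∃ (v₀ : Fin N → ℂ) (w : Fin K → Fin N → ℂ) (τ₀ : ℝ)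
    (τ₁ : Fin K → ℝ) (p f : Fin K → ℝ),
    (∀ n, ‖v₀ n‖ = 1) ∧ (∀ i n, ‖w i n‖ = 1) ∧ 0 ≤ τ₀ ∧
    (∀ i, 0 ≤ τ₁ i) ∧ (∀ k, 0 ≤ p k) ∧ (∀ k, 0 ≤ f k) ∧ τ₀ + ∑ i, τ₁ i ≤ T ∧
    (∀ k, (∑ i, τ₁ i) * p k + T * γ * f k ^ 3 ≤ τ₀ * η * P * gain h q k v₀) ∧
    r = B * ∑ i, τ₁ i * Real.logb 2 (1 + (∑ k, p k * gain h q k (w i)) / σ2)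
        + ∑ k, T * f k / C}

/-- Lemma 1 (second part): `R_NOMA^{case2} = R_NOMA^{case3}`. -/
theorem RNOMA2_eq_RNOMA3 {K N : ℕ} (hK : 1 ≤ K) (hN : 1 ≤ N)
    (h : Fin K → ℂ) (q : Fin K → Fin N → ℂ) (B T C γ η P σ2 : ℝ)
    (hB : 0 < B) (hT : 0 < T) (hC : 0 < C) (hγ : 0 < γ)
    (hη : 0 < η) (hP : 0 < P) (hσ : 0 < σ2) :
    RNOMA2 h q B T C γ η P σ2 = RNOMA3 h q B T C γ η P σ2 := by
  have i0 : Fin K := ⟨0, hK⟩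
  apply csSup_eq_csSup_of_forall_exists_le
  · -- every case-2 point is (equal to) a case-3 point
    rintro r ⟨v₀, v₁, τ₀, τ₁, p, f, hv₀, hv₁, hτ₀, hτ₁, hp, hf, hsum, hpow, hr⟩
    refine ⟨r, ⟨v₀, fun _ => v₁, τ₀, fun i => if i = i0 then τ₁ else 0, p, f,
      hv₀, fun _ => hv₁, hτ₀, ?_, hp, hf, ?_, ?_, ?_⟩, le_refl r⟩
    · intro i; dsimp only; split <;> simp [hτ₁]
    · simpa [Finset.sum_ite_eq'] using hsum
    · intro k; simpa [Finset.sum_ite_eq'] using hpow k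
    · rw [hr]
      simp only [ite_mul, zero_mul, Finset.sum_ite_eq', Finset.mem_univ, if_true]
      ring
  · -- every case-3 point is below a case-2 point
    rintro r ⟨v₀, w, τ₀, τ₁, p, f, hv₀, hw, hτ₀, hτ₁, hp, hf, hsum, hpow, hr⟩
    set L : Fin K → ℝ := fun i => Real.logb 2 (1 + (∑ k, p k * gain h q k (w i)) / σ2)
      with hL
    obtain ⟨i', -, hi'⟩ := Finset.exists_max_image Finset.univ L ⟨i0, Finset.mem_univ i0⟩
    refine ⟨B * (∑ i, τ₁ i) * L i' + ∑ k, T * f k / C,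
      ⟨v₀, w i', τ₀, ∑ i, τ₁ i, p, f, hv₀, hw i', hτ₀,
        Finset.sum_nonneg (fun i _ => hτ₁ i), hp, hf, hsum, hpow, rfl⟩, ?_⟩
    rw [hr, mul_assoc]
    have hsum_le : ∑ i, τ₁ i * L i ≤ (∑ i, τ₁ i) * L i' := by
      rw [Finset.sum_mul]
      exact Finset.sum_le_sum fun i _ =>
        mul_le_mul_of_nonneg_left (hi' i (Finset.mem_univ i)) (hτ₁ i)
    exact add_le_add_left (mul_le_mul_of_nonneg_left hsum_le hB.le) _
end

section
/- (Existence and uniqueness of the root p* in Proposition 1) Let σ², η, P, h > 0 and define G(p) = log₂(1 + p·h/σ²) − p·h/((σ² + p·h)·ln 2) − η·P·h²/((σ² + p·h)·ln 2) for p ≥ 0. Then G is strictly increasing on [0, ∞), G(0) = −η·P·h²/(σ²·ln 2) < 0, G(p) → ∞ as p → ∞, and there exists a unique p* > 0 with G(p*) = 0. -/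
open Filter

/-- Existence and uniqueness of the root `p*` in Proposition 1: for `σ², η, P, h > 0`,
the function `G(p) = log₂(1 + p·h/σ²) − p·h/((σ²+p·h)·ln 2) − η·P·h²/((σ²+p·h)·ln 2)`
is strictly increasing on `[0, ∞)`, equals `−η·P·h²/(σ²·ln 2) < 0` at `p = 0`, tends to
`∞` as `p → ∞`, and has a unique positive root `p*`. -/
theorem G_strictMono_and_unique_root (σ2 η P h : ℝ)
    (hσ : 0 < σ2) (hη : 0 < η) (hP : 0 < P) (hh : 0 < h) :
    StrictMonoOn
        (fun p : ℝ => Real.logb 2 (1 + p * h / σ2) - p * h / ((σ2 + p * h) * Real.log 2)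
          - η * P * h ^ 2 / ((σ2 + p * h) * Real.log 2)) (Set.Ici (0 : ℝ)) ∧
      (Real.logb 2 (1 + 0 * h / σ2) - 0 * h / ((σ2 + 0 * h) * Real.log 2)
          - η * P * h ^ 2 / ((σ2 + 0 * h) * Real.log 2)
        = -(η * P * h ^ 2 / (σ2 * Real.log 2))) ∧
      (-(η * P * h ^ 2 / (σ2 * Real.log 2)) < 0) ∧
      Tendsto
        (fun p : ℝ => Real.logb 2 (1 + p * h / σ2) - p * h / ((σ2 + p * h) * Real.log 2)
          - η * P * h ^ 2 / ((σ2 + p * h) * Real.log 2)) atTop atTop ∧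
      (∃! p : ℝ, 0 < p ∧
        Real.logb 2 (1 + p * h / σ2) - p * h / ((σ2 + p * h) * Real.log 2)
          - η * P * h ^ 2 / ((σ2 + p * h) * Real.log 2) = 0) := by
  set K : ℝ := η * P * h ^ 2 with hK
  have hKpos : 0 < K := by positivity
  have hlog2 : 0 < Real.log 2 := Real.log_pos one_lt_two
  set F : ℝ → ℝ := fun p : ℝ => Real.logb 2 (1 + p * h / σ2)
      - p * h / ((σ2 + p * h) * Real.log 2) - K / ((σ2 + p * h) * Real.log 2) with hF
  have hrw : ∀ p : ℝ, 0 ≤ p → F p =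
      (Real.log (σ2 + p * h) - Real.log σ2 - (p * h + K) / (σ2 + p * h)) / Real.log 2 := by
    intro p hp
    have hs : 0 < σ2 + p * h := by positivity
    simp only [hF, Real.logb]
    rw [show 1 + p * h / σ2 = (σ2 + p * h) / σ2 by field_simp,
      Real.log_div hs.ne' hσ.ne']
    field_simp
    ring
  have hmono : StrictMonoOn F (Set.Ici (0 : ℝ)) := by
    intro a ha b hb hab
    simp only [Set.mem_Ici] at ha hb
    have hs1 : 0 < σ2 + a * h := by positivity
    have hs2 : 0 < σ2 + b * h := by positivity
    have h12 : σ2 + a * h < σ2 + b * h := by nlinarith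
    have hσ1 : σ2 ≤ σ2 + a * h := by nlinarith
    rw [hrw a ha, hrw b hb, div_lt_div_iff_of_pos_right hlog2]
    have hlog : Real.log ((σ2 + a * h) / (σ2 + b * h)) < (σ2 + a * h) / (σ2 + b * h) - 1 :=
      Real.log_lt_sub_one_of_pos (div_pos hs1 hs2)
        (by
          intro hc
          rw [div_eq_one_iff_eq hs2.ne'] at hc
          linarith)
    rw [Real.log_div hs1.ne' hs2.ne'] at hlog
    have e1 : (b * h + K) / (σ2 + b * h) - (a * h + K) / (σ2 + a * h)
        = (σ2 - K) * ((σ2 + b * h) - (σ2 + a * h)) / ((σ2 + a * h) * (σ2 + b * h)) := by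
      field_simp
      ring
    have e2 : 1 - (σ2 + a * h) / (σ2 + b * h)
        = (σ2 + a * h) * ((σ2 + b * h) - (σ2 + a * h)) / ((σ2 + a * h) * (σ2 + b * h)) := by
      field_simp
    have e3 : (σ2 - K) * ((σ2 + b * h) - (σ2 + a * h)) / ((σ2 + a * h) * (σ2 + b * h))
        ≤ (σ2 + a * h) * ((σ2 + b * h) - (σ2 + a * h)) / ((σ2 + a * h) * (σ2 + b * h)) := by
      apply div_le_div_of_nonneg_right ?_ (by positivity)
      nlinarith
    linarith
  have hF0 : F 0 = -(K / (σ2 * Real.log 2)) := by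
    simp [hF]
  have hF0neg : -(K / (σ2 * Real.log 2)) < 0 := by
    have : 0 < K / (σ2 * Real.log 2) := by positivity
    linarith
  have htend : Tendsto F atTop atTop := by
    have hg : Tendsto (fun p : ℝ =>
        (Real.log (σ2 + p * h) - (Real.log σ2 + 1 + K / σ2)) / Real.log 2) atTop atTop := by
      apply Tendsto.atTop_div_const hlog2
      apply tendsto_atTop_add_const_right
      exact Real.tendsto_log_atTop.comp
        (tendsto_atTop_add_const_left _ σ2 (tendsto_id.atTop_mul_const hh))
    apply tendsto_atTop_mono' atTop ?_ hg
    filter_upwards [eventually_ge_atTop (0 : ℝ)] with p hp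
    have hs : 0 < σ2 + p * h := by positivity
    rw [hrw p hp]
    apply div_le_div_of_nonneg_right ?_ hlog2.le
    have b1 : p * h / (σ2 + p * h) ≤ 1 := (div_le_one hs).mpr (by nlinarith)
    have b2 : K / (σ2 + p * h) ≤ K / σ2 :=
      div_le_div_of_nonneg_left hKpos.le hσ (by nlinarith)
    rw [add_div]
    linarith
  refine ⟨hmono, by simp only [hF] at hF0; simp only [hK] at hF0 ⊢; exact hF0, hF0neg, htend, ?_⟩
  -- existence and uniqueness
  obtain ⟨M, hM⟩ := (htend.eventually_ge_atTop 1).exists_forall_of_atTop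
  set M' : ℝ := max M 1 with hM'
  have hM'1 : (1:ℝ) ≤ M' := le_max_right _ _
  have hM'0 : (0:ℝ) ≤ M' := by linarith
  have hFM' : 1 ≤ F M' := hM M' (le_max_left _ _)
  have hc : ContinuousOn F (Set.Icc 0 M') := by
    intro p hp
    have hp0 : 0 ≤ p := hp.1
    have hs : 0 < σ2 + p * h := by positivity
    have h1 : (0:ℝ) < 1 + p * h / σ2 := by positivity
    apply ContinuousAt.continuousWithinAt
    apply ContinuousAt.sub
    apply ContinuousAt.sub
    · simp only [Real.logb]
      have inner : ContinuousAt (fun x : ℝ => 1 + x * h / σ2) p := by fun_prop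
      exact (inner.log h1.ne').div_const _
    · exact ContinuousAt.div (by fun_prop) (by fun_prop) (by positivity)
    · exact ContinuousAt.div (by fun_prop) (by fun_prop) (by positivity)
  have hmem : (0:ℝ) ∈ Set.Icc (F 0) (F M') := by
    constructor
    · rw [hF0]; linarith
    · linarith
  obtain ⟨p, hpmem, hFp⟩ := intermediate_value_Icc hM'0 hc hmem
  have hppos : 0 < p := by
    rcases lt_or_eq_of_le hpmem.1 with h' | h'
    · exact h'
    · exfalso; rw [← h'] at hFp; rw [hF0] at hFp; linarith
  refine ⟨p, ⟨hppos, hFp⟩, ?_⟩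
  rintro q ⟨hqpos, hFq⟩
  exact hmono.injOn (Set.mem_Ici.mpr hqpos.le) (Set.mem_Ici.mpr hppos.le) (hFq.trans hFp.symm)
end

section
/- (Implicit differentiation of the root, equation (23)/(24)) Let σ², η, P > 0 and define G(p, h) = log₂(1 + p·h/σ²) − p·h/((σ² + p·h)·ln 2) − η·P·h²/((σ² + p·h)·ln 2). Let h₀ > 0 and let p : (0, ∞) → ℝ be a function that is differentiable at h₀ with p(h₀) ≥ 0 and satisfies G(p(h), h) = 0 for all h in a neighborhood of h₀. Then p′(h₀) = (η·P·(2σ² + h₀·p(h₀)) − p(h₀)²) / (h₀·(η·P·h₀ + p(h₀))). -/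
/-- Implicit differentiation of the root (equations (23)/(24)): if `p(h)` is
differentiable at `h₀ > 0`, nonnegative there, and satisfies `G(p(h), h) = 0` for all
`h` in a neighborhood of `h₀`, where
`G(p,h) = log₂(1 + p·h/σ²) − p·h/((σ²+p·h)·ln 2) − η·P·h²/((σ²+p·h)·ln 2)`, then
`p′(h₀) = (η·P·(2σ² + h₀·p(h₀)) − p(h₀)²)/(h₀·(η·P·h₀ + p(h₀)))`. -/
theorem implicit_derivative_of_root (σ2 η P : ℝ)
    (hσ : 0 < σ2) (hη : 0 < η) (hP : 0 < P)
    (h₀ : ℝ) (hh₀ : 0 < h₀) (p : ℝ → ℝ)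
    (hdiff : DifferentiableAt ℝ p h₀) (hp0 : 0 ≤ p h₀)
    (hroot : ∀ᶠ h in nhds h₀,
      Real.logb 2 (1 + p h * h / σ2) - p h * h / ((σ2 + p h * h) * Real.log 2)
        - η * P * h ^ 2 / ((σ2 + p h * h) * Real.log 2) = 0) :
    deriv p h₀ =
      (η * P * (2 * σ2 + h₀ * p h₀) - (p h₀) ^ 2) / (h₀ * (η * P * h₀ + p h₀)) := by
  have hln2 : Real.log 2 ≠ 0 := by
    have : (0:ℝ) < Real.log 2 := Real.log_pos (by norm_num)
    exact this.ne'
  set F : ℝ → ℝ := fun h =>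
    Real.log (1 + p h * h / σ2) - (p h * h + η * P * h ^ 2) / (σ2 + p h * h) with hF
  have hF0 : ∀ᶠ h in nhds h₀, F h = 0 := by
    filter_upwards [hroot] with h hh
    have key : ∀ a u w c : ℝ,
        Real.log 2 * (a / Real.log 2 - u / (c * Real.log 2) - w / (c * Real.log 2))
          = a - (u + w) / c := by
      intro a u w c
      rw [← div_div u c, ← div_div w c, ← sub_div, ← sub_div, mul_comm,
        div_mul_cancel₀ _ hln2, sub_sub, ← add_div]
    have : F h = Real.log 2 * (Real.logb 2 (1 + p h * h / σ2)
        - p h * h / ((σ2 + p h * h) * Real.log 2)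
        - η * P * h ^ 2 / ((σ2 + p h * h) * Real.log 2)) := by
      rw [Real.logb, key]
    rw [this, hh, mul_zero]
  have hp0' : 0 ≤ p h₀ * h₀ := mul_nonneg hp0 hh₀.le
  have hd1 : (0:ℝ) < 1 + p h₀ * h₀ / σ2 := by positivity
  have hd2 : (0:ℝ) < σ2 + p h₀ * h₀ := by positivity
  have hu : HasDerivAt (fun h => p h * h) (deriv p h₀ * h₀ + p h₀ * 1) h₀ :=
    hdiff.hasDerivAt.mul (hasDerivAt_id h₀)
  have hlog : HasDerivAt (fun h => Real.log (1 + p h * h / σ2))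
      (((deriv p h₀ * h₀ + p h₀ * 1) / σ2) / (1 + p h₀ * h₀ / σ2)) h₀ :=
    (((hu.div_const σ2).const_add 1).log hd1.ne')
  have hnum : HasDerivAt (fun h => p h * h + η * P * h ^ 2)
      (deriv p h₀ * h₀ + p h₀ * 1 + η * P * (2 * h₀ ^ 1)) h₀ :=
    hu.add ((hasDerivAt_pow 2 h₀).const_mul (η * P))
  have hden : HasDerivAt (fun h => σ2 + p h * h) (deriv p h₀ * h₀ + p h₀ * 1) h₀ :=
    hu.const_add σ2
  have hdiv := hnum.div hden hd2.ne'
  have hFd : HasDerivAt F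
      (((deriv p h₀ * h₀ + p h₀ * 1) / σ2) / (1 + p h₀ * h₀ / σ2)
        - ((deriv p h₀ * h₀ + p h₀ * 1 + η * P * (2 * h₀ ^ 1)) * (σ2 + p h₀ * h₀)
            - (p h₀ * h₀ + η * P * h₀ ^ 2) * (deriv p h₀ * h₀ + p h₀ * 1))
          / (σ2 + p h₀ * h₀) ^ 2) h₀ := hlog.sub hdiv
  have hF0' : HasDerivAt F 0 h₀ :=
    (hasDerivAt_const h₀ (0:ℝ)).congr_of_eventuallyEq hF0
  have E := hFd.unique hF0'
  set p' := deriv p h₀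
  have hdenne : h₀ * (η * P * h₀ + p h₀) ≠ 0 := by positivity
  rw [eq_div_iff hdenne]
  field_simp at E
  have h1 : (σ2 + p h₀ * h₀) * h₀ ≠ 0 := by positivity
  have h2 : (σ2 + p h₀ * h₀) * h₀ *
      ((η * P * h₀ + p h₀) * (p' * h₀ + p h₀) - 2 * η * P * (σ2 + p h₀ * h₀)) = 0 := by
    linear_combination (σ2 + p h₀ * h₀) * E
  have hK := (mul_eq_zero.mp h2).resolve_left h1
  linear_combination hK
end

section
/- (Closed form for the logarithmic derivative of the threshold along the root) Let B, C, σ², γ, η, P > 0 and define G(p, h) = log₂(1 + p·h/σ²) − p·h/((σ² + p·h)·ln 2) − η·P·h²/((σ² + p·h)·ln 2). Let h₀ > 0 and let p : (0, ∞) → ℝ be differentiable at h₀ with p(h₀) ≥ 0 and G(p(h), h) = 0 for all h in a neighborhood of h₀. Define thre(h) = (γ/(η·h)) · ( ((σ² + p(h)·h)·ln 2) / (3·C·h·γ·B) )^{3/2}. Then p(h₀) + h₀·p′(h₀) = 2·η·P·(σ² + h₀·p(h₀))/(p(h₀) + η·P·h₀), and consequently the derivative of h ↦ ln(thre(h)) at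 h₀ equals 3·η·P/(p(h₀) + η·P·h₀) − 5/(2·h₀) = (η·P·h₀ − 5·p(h₀)) / (2·h₀·(p(h₀) + η·P·h₀)). -/
/-- Closed form for the logarithmic derivative of the threshold along the root: if
`p(h)` is differentiable at `h₀ > 0`, nonnegative there, and satisfies `G(p(h), h) = 0`
near `h₀`, where
`G(p,h) = log₂(1 + p·h/σ²) − p·h/((σ²+p·h)·ln 2) − η·P·h²/((σ²+p·h)·ln 2)`, and
`thre(h) = (γ/(η·h)) · (((σ² + p(h)·h)·ln 2)/(3·C·h·γ·B))^{3/2}`, then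
`p(h₀) + h₀·p′(h₀) = 2·η·P·(σ² + h₀·p(h₀))/(p(h₀) + η·P·h₀)` and the derivative of
`h ↦ ln(thre(h))` at `h₀` equals `3·η·P/(p(h₀) + η·P·h₀) − 5/(2·h₀)`, which equals
`(η·P·h₀ − 5·p(h₀))/(2·h₀·(p(h₀) + η·P·h₀))`. -/
theorem log_threshold_derivative_closed_form (B C σ2 γ η P : ℝ)
    (hB : 0 < B) (hC : 0 < C) (hσ : 0 < σ2) (hγ : 0 < γ) (hη : 0 < η) (hP : 0 < P)
    (h₀ : ℝ) (hh₀ : 0 < h₀) (p : ℝ → ℝ)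
    (hdiff : DifferentiableAt ℝ p h₀) (hp0 : 0 ≤ p h₀)
    (hroot : ∀ᶠ h in nhds h₀,
      Real.logb 2 (1 + p h * h / σ2) - p h * h / ((σ2 + p h * h) * Real.log 2)
        - η * P * h ^ 2 / ((σ2 + p h * h) * Real.log 2) = 0) :
    p h₀ + h₀ * deriv p h₀ = 2 * η * P * (σ2 + h₀ * p h₀) / (p h₀ + η * P * h₀) ∧
    deriv (fun h : ℝ => Real.log ((γ / (η * h)) *
        (((σ2 + p h * h) * Real.log 2) / (3 * C * h * γ * B)) ^ ((3 : ℝ) / 2))) h₀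
      = 3 * η * P / (p h₀ + η * P * h₀) - 5 / (2 * h₀) ∧
    3 * η * P / (p h₀ + η * P * h₀) - 5 / (2 * h₀)
      = (η * P * h₀ - 5 * p h₀) / (2 * h₀ * (p h₀ + η * P * h₀)) := by
  have hln2 : 0 < Real.log 2 := Real.log_pos one_lt_two
  have hU : 0 < σ2 + p h₀ * h₀ := by positivity
  have hcont : ContinuousAt (fun h => σ2 + p h * h) h₀ :=
    continuousAt_const.add (hdiff.continuousAt.mul continuousAt_id)
  have hposev : ∀ᶠ h in nhds h₀, 0 < σ2 + p h * h :=
    hcont.eventually (eventually_gt_nhds hU)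
  have hhev : ∀ᶠ h in nhds h₀, 0 < h := eventually_gt_nhds hh₀
  -- step 1: f =ᶠ 0
  set f : ℝ → ℝ := fun h =>
    Real.log (σ2 + p h * h) - Real.log σ2 - (p h * h + η * P * h ^ 2) / (σ2 + p h * h)
    with hf
  have hfeq : f =ᶠ[nhds h₀] fun _ => (0 : ℝ) := by
    filter_upwards [hroot, hposev] with h hr hpos
    have h1 : (1 : ℝ) + p h * h / σ2 = (σ2 + p h * h) / σ2 := by field_simp
    rw [Real.logb, h1, Real.log_div hpos.ne' hσ.ne'] at hr
    set A := Real.log (σ2 + p h * h) - Real.log σ2 with hA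
    have hr2 : A / Real.log 2
        = (p h * h + η * P * h ^ 2) / ((σ2 + p h * h) * Real.log 2) := by
      rw [sub_sub, ← add_div] at hr
      linarith
    rw [div_eq_div_iff hln2.ne' (by positivity)] at hr2
    have h3 : (A * (σ2 + p h * h)) * Real.log 2
        = (p h * h + η * P * h ^ 2) * Real.log 2 := by linear_combination hr2
    have h4 := mul_right_cancel₀ hln2.ne' h3
    have h5 : (p h * h + η * P * h ^ 2) / (σ2 + p h * h) = A := by
      rw [div_eq_iff hpos.ne']; linarith
    simp only [hf]
    linarith [h5, hA]
  -- derivative of f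
  have hu : HasDerivAt (fun h => p h * h) (deriv p h₀ * h₀ + p h₀ * 1) h₀ :=
    hdiff.hasDerivAt.mul (hasDerivAt_id h₀)
  set u' : ℝ := deriv p h₀ * h₀ + p h₀ * 1 with hu'def
  have hden : HasDerivAt (fun h => σ2 + p h * h) u' h₀ := by
    have h := (hasDerivAt_const h₀ σ2).add hu; simp only [zero_add] at h; exact h
  have hlog : HasDerivAt (fun h => Real.log (σ2 + p h * h)) (u' / (σ2 + p h₀ * h₀)) h₀ :=
    hden.log hU.ne'
  have hnum : HasDerivAt (fun h => p h * h + η * P * h ^ 2)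
      (u' + η * P * (2 * h₀)) h₀ := by
    have := (hasDerivAt_pow 2 h₀).const_mul (η * P)
    have h := hu.add this; simp at h; exact h
  have hquot : HasDerivAt (fun h => (p h * h + η * P * h ^ 2) / (σ2 + p h * h))
      (((u' + η * P * (2 * h₀)) * (σ2 + p h₀ * h₀)
        - (p h₀ * h₀ + η * P * h₀ ^ 2) * u') / (σ2 + p h₀ * h₀) ^ 2) h₀ :=
    hnum.div hden hU.ne'
  have hfD : HasDerivAt f
      (u' / (σ2 + p h₀ * h₀) - 0
        - ((u' + η * P * (2 * h₀)) * (σ2 + p h₀ * h₀)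
        - (p h₀ * h₀ + η * P * h₀ ^ 2) * u') / (σ2 + p h₀ * h₀) ^ 2) h₀ :=
    (hlog.sub (hasDerivAt_const h₀ (Real.log σ2))).sub hquot
  have hf0 : HasDerivAt f 0 h₀ :=
    (hasDerivAt_const h₀ (0 : ℝ)).congr_of_eventuallyEq hfeq
  have hD0 := hfD.unique hf0
  field_simp at hD0
  -- key equation
  have hpη : 0 < p h₀ + η * P * h₀ := by positivity
  have h2 : (σ2 + p h₀ * h₀) * (-(2 * (η * P * h₀) * (σ2 + p h₀ * h₀))
      + (p h₀ * h₀ + η * P * h₀ ^ 2) * u')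
      = (σ2 + p h₀ * h₀) * 0 := by linear_combination (σ2 + p h₀ * h₀) * hD0
  have h2' := mul_left_cancel₀ hU.ne' h2
  simp only [hu'def] at h2'
  have key : (p h₀ + h₀ * deriv p h₀) * (p h₀ + η * P * h₀)
      = 2 * η * P * (σ2 + h₀ * p h₀) := by
    have : h₀ * ((p h₀ + h₀ * deriv p h₀) * (p h₀ + η * P * h₀))
        = h₀ * (2 * η * P * (σ2 + h₀ * p h₀)) := by linear_combination h2'
    exact mul_left_cancel₀ hh₀.ne' this
  have c1 : p h₀ + h₀ * deriv p h₀
      = 2 * η * P * (σ2 + h₀ * p h₀) / (p h₀ + η * P * h₀) :=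
    (eq_div_iff hpη.ne').mpr key
  refine ⟨c1, ?_, ?_⟩
  · -- deriv of log thre
    have hLg : (fun h : ℝ => Real.log ((γ / (η * h)) *
        (((σ2 + p h * h) * Real.log 2) / (3 * C * h * γ * B)) ^ ((3 : ℝ) / 2)))
        =ᶠ[nhds h₀] fun h =>
          Real.log γ - (Real.log η + Real.log h)
          + (3 / 2) * ((Real.log (σ2 + p h * h) + Real.log (Real.log 2))
              - (Real.log (3 * C * γ * B) + Real.log h)) := by
      filter_upwards [hposev, hhev] with h hpos hh
      have hX : 0 < ((σ2 + p h * h) * Real.log 2) / (3 * C * h * γ * B) := by positivity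
      have ha : 0 < γ / (η * h) := by positivity
      rw [Real.log_mul ha.ne' (Real.rpow_pos_of_pos hX _).ne', Real.log_rpow hX,
        Real.log_div hγ.ne' (by positivity : (0:ℝ) < η * h).ne',
        Real.log_mul hη.ne' hh.ne',
        Real.log_div (by positivity : (0:ℝ) < (σ2 + p h * h) * Real.log 2).ne'
          (by positivity : (0:ℝ) < 3 * C * h * γ * B).ne',
        Real.log_mul hpos.ne' hln2.ne',
        show (3 : ℝ) * C * h * γ * B = 3 * C * γ * B * h by ring,
        Real.log_mul (by positivity : (0:ℝ) < 3 * C * γ * B).ne' hh.ne']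
    have hl : HasDerivAt Real.log (1 / h₀) h₀ := by
      simpa [one_div] using Real.hasDerivAt_log hh₀.ne'
    have d1 : HasDerivAt (fun h : ℝ => Real.log γ - (Real.log η + Real.log h))
        (0 - (0 + 1 / h₀)) h₀ :=
      (hasDerivAt_const _ _).sub ((hasDerivAt_const _ _).add hl)
    have d2 : HasDerivAt (fun h : ℝ =>
        (Real.log (σ2 + p h * h) + Real.log (Real.log 2))
          - (Real.log (3 * C * γ * B) + Real.log h))
        ((u' / (σ2 + p h₀ * h₀) + 0) - (0 + 1 / h₀)) h₀ :=
      (hlog.add (hasDerivAt_const _ _)).sub ((hasDerivAt_const _ _).add hl)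
    have hgD := d1.add (HasDerivAt.const_mul ((3 : ℝ) / 2) d2)
    have hLD := hgD.congr_of_eventuallyEq hLg
    rw [hLD.deriv]
    have hfrac : u' / (σ2 + p h₀ * h₀) = 2 * η * P / (p h₀ + η * P * h₀) := by
      rw [div_eq_div_iff hU.ne' hpη.ne']
      simp only [hu'def]
      linear_combination key
    rw [hfrac]
    field_simp
    ring
  · field_simp
    ring
end

section
/- (Quantitative form of Proposition 2: the activation threshold decreases in the channel gain) Let B, C, σ², γ, η, P > 0 and define G(p, h) = log₂(1 + p·h/σ²) − p·h/((σ² + p·h)·ln 2) − η·P·h²/((σ² + p·h)·ln 2). Let h₀ > 0 and let p : (0, ∞) → ℝ be differentiable at h₀ with p(h₀) ≥ 0 and G(p(h), h) = 0 for all h near h₀, and define thre(h) = (γ/(η·h)) · ( ((σ² + p(h)·h)·ln 2) / (3·C·h·γ·B) )^{3/2}. If η·P·h₀ < 5·p(h₀), then the derivative of thre at h₀ is strictly negative; in particular thre is strictly decreasing in the channel power gain at h₀. -/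
set_option maxHeartbeats 1000000


/-- Quantitative form of Proposition 2: along the root `p(h)` of `G(p,h) = 0`, where
`G(p,h) = log₂(1 + p·h/σ²) − p·h/((σ²+p·h)·ln 2) − η·P·h²/((σ²+p·h)·ln 2)`, the
offloading-activation threshold
`thre(h) = (γ/(η·h)) · (((σ² + p(h)·h)·ln 2)/(3·C·h·γ·B))^{3/2}` has strictly negative
derivative at `h₀` whenever `η·P·h₀ < 5·p(h₀)`; i.e. `thre` is strictly decreasing in
the channel power gain at `h₀`. -/
theorem threshold_strictly_decreasing (B C σ2 γ η P : ℝ)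
    (hB : 0 < B) (hC : 0 < C) (hσ : 0 < σ2) (hγ : 0 < γ) (hη : 0 < η) (hP : 0 < P)
    (h₀ : ℝ) (hh₀ : 0 < h₀) (p : ℝ → ℝ)
    (hdiff : DifferentiableAt ℝ p h₀) (hp0 : 0 ≤ p h₀)
    (hroot : ∀ᶠ h in nhds h₀,
      Real.logb 2 (1 + p h * h / σ2) - p h * h / ((σ2 + p h * h) * Real.log 2)
        - η * P * h ^ 2 / ((σ2 + p h * h) * Real.log 2) = 0)
    (hcond : η * P * h₀ < 5 * p h₀) :
    deriv (fun h : ℝ => (γ / (η * h)) *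
        (((σ2 + p h * h) * Real.log 2) / (3 * C * h * γ * B)) ^ ((3 : ℝ) / 2)) h₀
      < 0 := by
  set p₀ := p h₀ with hp₀def
  set u₀ : ℝ := σ2 + p₀ * h₀ with hu₀def
  have hu₀ : 0 < u₀ := by
    have := mul_nonneg hp0 hh₀.le
    simp only [hu₀def]; linarith
  set d : ℝ := deriv p h₀ * h₀ + p₀ * 1 with hddef
  have hq : HasDerivAt (fun h => p h * h) d h₀ := hdiff.hasDerivAt.mul (hasDerivAt_id h₀)
  have hu : HasDerivAt (fun h => σ2 + p h * h) d h₀ := by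
    exact hq.const_add σ2
  have hL : (0:ℝ) < Real.log 2 := Real.log_pos one_lt_two
  -- positivity of u near h₀
  have hupos : ∀ᶠ h in nhds h₀, 0 < σ2 + p h * h := by
    have hc : ContinuousAt (fun h => σ2 + p h * h) h₀ := hu.continuousAt
    have := hc.preimage_mem_nhds (Ioi_mem_nhds hu₀)
    filter_upwards [this] with h hh
    exact hh
  -- F vanishes near h₀
  have heqF : ∀ᶠ h in nhds h₀,
      (fun h => Real.log (σ2 + p h * h) - Real.log σ2 - 1 + σ2 / (σ2 + p h * h)
        - η * P * h ^ 2 / (σ2 + p h * h)) h = (fun _ : ℝ => (0:ℝ)) h := by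
    filter_upwards [hroot, hupos] with h hG hup
    rw [Real.logb, show 1 + p h * h / σ2 = (σ2 + p h * h)/σ2 by field_simp,
      Real.log_div hup.ne' hσ.ne'] at hG
    field_simp at hG ⊢
    have key : ((σ2 + p h * h) * Real.log 2 ^ 2) *
        ((Real.log (σ2 + p h * h) - Real.log σ2 - 1) * (σ2 + p h * h) + σ2 - η * P * h ^ 2)
        = 0 := by linear_combination (σ2 + p h * h) * Real.log 2 ^ 2 * hG
    rcases mul_eq_zero.mp key with h1 | h2
    · exact absurd h1 (by positivity)
    · linarith
  -- derivative of F at h₀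
  have hF : HasDerivAt (fun h => Real.log (σ2 + p h * h) - Real.log σ2 - 1 + σ2 / (σ2 + p h * h)
      - η * P * h ^ 2 / (σ2 + p h * h))
      (d / u₀ - 0 - 0 + (0 * u₀ - σ2 * d) / u₀ ^ 2
        + -((η * P * (2 * h₀ ^ 1) * u₀ - η * P * h₀ ^ 2 * d) / u₀ ^ 2)) h₀ := by
    have h1 : HasDerivAt (fun h => Real.log (σ2 + p h * h)) (d / u₀) h₀ := hu.log hu₀.ne'
    have h2 : HasDerivAt (fun h => σ2 / (σ2 + p h * h)) ((0 * u₀ - σ2 * d) / u₀ ^ 2) h₀ :=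
      (hasDerivAt_const h₀ σ2).div hu hu₀.ne'
    have h3 : HasDerivAt (fun h : ℝ => η * P * h ^ 2) (η * P * (2 * h₀ ^ 1)) h₀ := by
      simpa [mul_assoc] using ((hasDerivAt_pow 2 h₀).const_mul (η * P))
    have h4 : HasDerivAt (fun h => η * P * h ^ 2 / (σ2 + p h * h))
        ((η * P * (2 * h₀ ^ 1) * u₀ - η * P * h₀ ^ 2 * d) / u₀ ^ 2) h₀ := h3.div hu hu₀.ne'
    exact (((h1.sub (hasDerivAt_const h₀ (Real.log σ2))).sub (hasDerivAt_const h₀ 1)).add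
      h2).add h4.neg |>.congr_deriv (by ring) |>.congr_of_eventuallyEq (by
        filter_upwards with h; simp only [Pi.add_apply, Pi.sub_apply, Pi.neg_apply]; ring)
  -- the derivative of F is 0 since F vanishes near h₀
  have hF0 : d / u₀ - 0 - 0 + (0 * u₀ - σ2 * d) / u₀ ^ 2
      + -((η * P * (2 * h₀ ^ 1) * u₀ - η * P * h₀ ^ 2 * d) / u₀ ^ 2) = 0 := by
    have e1 := hF.deriv
    have e2 := Filter.EventuallyEq.deriv_eq heqF
    rw [deriv_const] at e2
    rw [← e1, e2]
  have hkey : d * (p₀ * h₀ + η * P * h₀ ^ 2) = 2 * η * P * h₀ * u₀ := by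
    have hu₀' : u₀ ≠ 0 := hu₀.ne'
    field_simp at hF0
    have key2 : u₀ ^ 3 * (d * (p₀ * h₀ + η * P * h₀ ^ 2) - 2 * η * P * h₀ * u₀) = 0 := by
      linear_combination u₀ ^ 3 * hF0 - u₀ ^ 3 * d * hu₀def
    rcases mul_eq_zero.mp key2 with h1 | h2
    · exact absurd h1 (by positivity)
    · linarith
  have hA : 0 < p₀ * h₀ + η * P * h₀ ^ 2 := by nlinarith [mul_nonneg hp0 hh₀.le, mul_pos (mul_pos hη hP) (pow_pos hh₀ 2)]
  have hineq : 3 * d * h₀ < 5 * u₀ := by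
    have hpos : 0 < u₀ * h₀ * (5 * p₀ - η * P * h₀) :=
      mul_pos (mul_pos hu₀ hh₀) (by linarith)
    have hfac : (5 * u₀ - 3 * d * h₀) * (p₀ * h₀ + η * P * h₀ ^ 2)
        = u₀ * h₀ * (5 * p₀ - η * P * h₀) + (5 * u₀ - 6 * η * P * h₀ * u₀ / 1) * 0 := by
      ring_nf
      linear_combination (-3 : ℝ) * h₀ * hkey
    nlinarith [hfac, hpos, hA]
  -- derivative of the threshold
  have hD₀ : (0:ℝ) < 3 * C * h₀ * γ * B := by positivity
  have hD : HasDerivAt (fun h : ℝ => 3 * C * h * γ * B) (3 * C * 1 * γ * B) h₀ := by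
    simpa using (((hasDerivAt_id h₀).const_mul (3 * C)).mul_const γ).mul_const B
  have hN : HasDerivAt (fun h => (σ2 + p h * h) * Real.log 2) (d * Real.log 2) h₀ :=
    hu.mul_const _
  set w' : ℝ := (d * Real.log 2 * (3 * C * h₀ * γ * B)
      - (u₀ * Real.log 2) * (3 * C * 1 * γ * B)) / (3 * C * h₀ * γ * B) ^ 2 with hw'def
  have hw : HasDerivAt (fun h => ((σ2 + p h * h) * Real.log 2) / (3 * C * h * γ * B)) w' h₀ :=
    hN.div hD hD₀.ne'
  have hw₀ : (0:ℝ) < u₀ * Real.log 2 / (3 * C * h₀ * γ * B) := by positivity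
  have hrpow : HasDerivAt
      (fun h => (((σ2 + p h * h) * Real.log 2) / (3 * C * h * γ * B)) ^ ((3:ℝ)/2))
      (((3:ℝ)/2) * (u₀ * Real.log 2 / (3 * C * h₀ * γ * B)) ^ ((3:ℝ)/2 - 1) * w') h₀ :=
    (hw.rpow_const (Or.inr (by norm_num : (1:ℝ) ≤ 3/2))).congr_deriv
      (by rw [← hp₀def, ← hu₀def]; ring)
  have hcoef : HasDerivAt (fun h : ℝ => γ / (η * h))
      ((0 * (η * h₀) - γ * (η * 1)) / (η * h₀) ^ 2) h₀ :=
    (hasDerivAt_const h₀ γ).div ((hasDerivAt_id h₀).const_mul η) (by positivity)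
  have hT : HasDerivAt (fun h : ℝ => (γ / (η * h)) *
      (((σ2 + p h * h) * Real.log 2) / (3 * C * h * γ * B)) ^ ((3 : ℝ) / 2))
      ((0 * (η * h₀) - γ * (η * 1)) / (η * h₀) ^ 2
          * ((u₀ * Real.log 2 / (3 * C * h₀ * γ * B)) ^ ((3:ℝ)/2))
        + (γ / (η * h₀)) *
          (((3:ℝ)/2) * (u₀ * Real.log 2 / (3 * C * h₀ * γ * B)) ^ ((3:ℝ)/2 - 1) * w')) h₀ :=
    hcoef.mul hrpow
  rw [hT.deriv]
  set s : ℝ := (u₀ * Real.log 2 / (3 * C * h₀ * γ * B)) ^ ((3:ℝ)/2 - 1) with hsdef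
  have hs : 0 < s := Real.rpow_pos_of_pos hw₀ _
  have e32 : (u₀ * Real.log 2 / (3 * C * h₀ * γ * B)) ^ ((3:ℝ)/2)
      = (u₀ * Real.log 2 / (3 * C * h₀ * γ * B)) * s := by
    rw [hsdef, Real.rpow_sub hw₀, Real.rpow_one]
    field_simp
  rw [e32]
  have hc1 : 0 < γ * Real.log 2 / (η * h₀ ^ 2 * (3 * C * h₀ * γ * B)) := by positivity
  have hQ : (0 * (η * h₀) - γ * (η * 1)) / (η * h₀) ^ 2
        * (u₀ * Real.log 2 / (3 * C * h₀ * γ * B))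
      + (γ / (η * h₀)) * (((3:ℝ)/2) * w')
      = γ * Real.log 2 / (η * h₀ ^ 2 * (3 * C * h₀ * γ * B)) * (3 * (d * h₀) - 5 * u₀) / 2 := by
    rw [hw'def]
    field_simp
    ring
  have hneg := mul_neg_of_pos_of_neg (mul_pos hs hc1)
    (show 3 * (d * h₀) - 5 * u₀ < 0 by linarith)
  calc (0 * (η * h₀) - γ * (η * 1)) / (η * h₀) ^ 2
        * (u₀ * Real.log 2 / (3 * C * h₀ * γ * B) * s)
      + (γ / (η * h₀)) * (((3:ℝ)/2) * s * w')
      = s * ((0 * (η * h₀) - γ * (η * 1)) / (η * h₀) ^ 2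
          * (u₀ * Real.log 2 / (3 * C * h₀ * γ * B))
        + (γ / (η * h₀)) * (((3:ℝ)/2) * w')) := by ring
    _ = s * (γ * Real.log 2 / (η * h₀ ^ 2 * (3 * C * h₀ * γ * B)) * (3 * (d * h₀) - 5 * u₀) / 2) := by
        rw [hQ]
    _ < 0 := by nlinarith [hneg]
end

section
/- (Proposition 1: threshold-based uplink-offloading activation condition) Let B, T, C, σ², γ, η, P > 0 and let h > 0 be the effective channel power gain. Consider the single-user problem: maximize B·τ₁·log₂(1 + e·h/(τ₁·σ²)) + T·f/C over nonnegative reals τ₀, τ₁, e, f with τ₀ + τ₁ ≤ T and e + T·γ·f³ ≤ τ₀·η·P·h (with the convention that τ₁·log₂(1 + e·h/(τ₁·σ²)) = 0 when τ₁ = 0). Let V be its optimal value and let V_loc = (T/C)·(η·P·h/γ)^{1/3} be the optimal value under the restriction e = 0 (local computing only). Then V > V_loc (i.e., uplink offloading is activated at the optimum) if and only if P > thre(h), where thre(h) = (γ/(η·h)) · ( ((σ² + p*·h)·ln 2) / (3·C·h·γ·B) )^{3/2} and p* is the unique nonnegative solution of G(p) = log₂(1 + p·h/σ²) − p·h/((σ²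 + p·h)·ln 2) − η·P·h²/((σ² + p·h)·ln 2) = 0. -/
lemma cube_rpow_third {y : ℝ} (hy : 0 ≤ y) : (y ^ ((1:ℝ)/3)) ^ 3 = y := by
  rw [← Real.rpow_natCast (y ^ ((1:ℝ)/3)) 3, ← Real.rpow_mul hy]
  norm_num

set_option maxHeartbeats 1000000 in
/-- Key per-point upper bound on the objective value of any feasible point. -/
lemma mec_key_bound (B T C σ2 γ η P h pstar b X M A L : ℝ)
    (hB : 0 < B) (hT : 0 < T) (hC : 0 < C) (hσ : 0 < σ2) (hγ : 0 < γ)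
    (hη : 0 < η) (hP : 0 < P) (hh : 0 < h) (hpstar0 : 0 ≤ pstar)
    (hb : 0 < b) (hgb : γ * b ^ 3 = η * P * h)
    (hXdef : X = (σ2 + pstar * h) * Real.log 2) (hX : 0 < X)
    (hMdef : M = B * h / X) (hM : 0 < M)
    (hAdef : A = 1 / (3 * C * γ * b ^ 2))
    (hLdef : L = Real.logb 2 (1 + pstar * h / σ2))
    (hBL : B * L = (pstar + η * P * h) * M)
    (τ₀ τ₁ e f : ℝ) (hτ₀ : 0 ≤ τ₀) (hτ₁ : 0 ≤ τ₁) (he : 0 ≤ e) (hf : 0 ≤ f)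
    (hsum : τ₀ + τ₁ ≤ T) (hcon : e + T * γ * f ^ 3 ≤ τ₀ * η * P * h) :
    B * τ₁ * Real.logb 2 (1 + e * h / (τ₁ * σ2)) + T * f / C
      ≤ T / C * b + (τ₁ * (η * P * h) + e) * (M - A) := by
  have hln2 : 0 < Real.log 2 := Real.log_pos one_lt_two
  have hηPh : (0:ℝ) < η * P * h := by positivity
  have hfb : T * f / C ≤ T / C * b - (τ₁ * (η * P * h) + e) * A := by
    have h2 : τ₀ * (η * P * h) ≤ (T - τ₁) * (η * P * h) :=
      mul_le_mul_of_nonneg_right (show τ₀ ≤ T - τ₁ by linarith) hηPh.le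
    have hgbT : T * (η * P * h) = T * (γ * b ^ 3) := by rw [hgb]
    have hgbτ : τ₁ * (η * P * h) = τ₁ * (γ * b ^ 3) := by rw [hgb]
    have h3 : T * γ * f ^ 3 ≤ T * γ * b ^ 3 - τ₁ * (η * P * h) - e := by
      linarith [hcon, h2, hgbT, hgbτ]
    have hcube : 3 * b ^ 2 * f ≤ 2 * b ^ 3 + f ^ 3 := by
      linarith [mul_nonneg (sq_nonneg (f - b)) (show (0:ℝ) ≤ f + 2 * b by linarith)]
    have hclaim : T * f * (3 * γ * b ^ 2) ≤ T * b * (3 * γ * b ^ 2)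
        - (τ₁ * (η * P * h) + e) := by
      linarith [mul_le_mul_of_nonneg_left hcube (show (0:ℝ) ≤ T * γ by positivity), h3]
    have hRHSeq : T / C * b - (τ₁ * (η * P * h) + e) * A
        = (T * b * (3 * γ * b ^ 2) - (τ₁ * (η * P * h) + e)) / (C * (3 * γ * b ^ 2)) := by
      rw [hAdef]; field_simp
    rw [hRHSeq, div_le_div_iff₀ hC (by positivity)]
    linarith [mul_le_mul_of_nonneg_right hclaim hC.le]
  have hlb : B * τ₁ * Real.logb 2 (1 + e * h / (τ₁ * σ2))
      ≤ B * τ₁ * L + (e - τ₁ * pstar) * M := by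
    rcases eq_or_lt_of_le hτ₁ with h0 | h0
    · rw [← h0]
      simp only [mul_zero, zero_mul, sub_zero, zero_add]
      linarith [mul_nonneg he hM.le]
    · have h1 : Real.log (1 + e * h / (τ₁ * σ2)) ≤ Real.log (1 + pstar * h / σ2)
          + (e * h / (τ₁ * σ2) - pstar * h / σ2) / (1 + pstar * h / σ2) := by
        have h2 := Real.log_le_sub_one_of_pos
          (show 0 < (1 + e * h / (τ₁ * σ2)) / (1 + pstar * h / σ2) by positivity)
        rw [Real.log_div (by positivity) (by positivity)] at h2
        have h3 : (1 + e * h / (τ₁ * σ2)) / (1 + pstar * h / σ2) - 1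
            = (e * h / (τ₁ * σ2) - pstar * h / σ2) / (1 + pstar * h / σ2) := by
          field_simp
          ring
        linarith
      have hBτ : (0:ℝ) ≤ B * τ₁ := by positivity
      have h5 : Real.log (1 + e * h / (τ₁ * σ2)) / Real.log 2
          ≤ Real.log (1 + pstar * h / σ2) / Real.log 2
            + ((e * h / (τ₁ * σ2) - pstar * h / σ2) / (1 + pstar * h / σ2)) / Real.log 2 := by
        rw [← add_div]
        exact (div_le_div_iff_of_pos_right hln2).mpr h1
      have h6 : B * τ₁ * (((e * h / (τ₁ * σ2) - pstar * h / σ2) / (1 + pstar * h / σ2))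
          / Real.log 2) = (e - τ₁ * pstar) * M := by
        rw [hMdef, hXdef]
        field_simp
      calc B * τ₁ * Real.logb 2 (1 + e * h / (τ₁ * σ2))
          = B * τ₁ * (Real.log (1 + e * h / (τ₁ * σ2)) / Real.log 2) := by
            rw [Real.logb]
        _ ≤ B * τ₁ * (Real.log (1 + pstar * h / σ2) / Real.log 2
            + ((e * h / (τ₁ * σ2) - pstar * h / σ2) / (1 + pstar * h / σ2)) / Real.log 2) :=
            mul_le_mul_of_nonneg_left h5 hBτ
        _ = B * τ₁ * L + (e - τ₁ * pstar) * M := by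
            rw [hLdef, Real.logb, mul_add, h6]
  calc B * τ₁ * Real.logb 2 (1 + e * h / (τ₁ * σ2)) + T * f / C
      ≤ (B * τ₁ * L + (e - τ₁ * pstar) * M)
        + (T / C * b - (τ₁ * (η * P * h) + e) * A) := add_le_add hlb hfb
    _ = T / C * b + (τ₁ * (η * P * h) + e) * (M - A) := by
        linear_combination τ₁ * hBL

set_option maxHeartbeats 1000000 in
/-- The threshold condition on `P` is equivalent to `A < M`. -/
lemma mec_thre_iff (B T C σ2 γ η P h pstar b X M A : ℝ)
    (hB : 0 < B) (hT : 0 < T) (hC : 0 < C) (hσ : 0 < σ2) (hγ : 0 < γ)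
    (hη : 0 < η) (hP : 0 < P) (hh : 0 < h) (hpstar0 : 0 ≤ pstar)
    (hbdef : b = (η * P * h / γ) ^ ((1:ℝ)/3)) (hb : 0 < b)
    (hXdef : X = (σ2 + pstar * h) * Real.log 2) (hX : 0 < X)
    (hMdef : M = B * h / X) (hM : 0 < M)
    (hAdef : A = 1 / (3 * C * γ * b ^ 2)) :
    (γ / (η * h) * (X / (3 * C * h * γ * B)) ^ ((3:ℝ)/2) < P) ↔ A < M := by
  have hb0 : (0:ℝ) < η * P * h / γ := by positivity
  have hQ : 0 < X / (3 * C * h * γ * B) := by positivity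
  have hb2 : b ^ 2 = (η * P * h / γ) ^ ((2:ℝ)/3) := by
    rw [hbdef, ← Real.rpow_natCast ((η * P * h / γ) ^ ((1:ℝ)/3)) 2, ← Real.rpow_mul hb0.le]
    norm_num
  have hRb : (b ^ 2) ^ ((3:ℝ)/2) = η * P * h / γ := by
    rw [hb2, ← Real.rpow_mul hb0.le]
    norm_num
  have e1 : (γ / (η * h) * (X / (3 * C * h * γ * B)) ^ ((3:ℝ)/2) < P)
      ↔ (X / (3 * C * h * γ * B)) ^ ((3:ℝ)/2) < η * P * h / γ := by
    rw [div_mul_eq_mul_div, div_lt_iff₀ (show (0:ℝ) < η * h by positivity),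
      lt_div_iff₀ hγ]
    constructor <;> intro h' <;> nlinarith [h']
  have e2 : (X / (3 * C * h * γ * B)) ^ ((3:ℝ)/2) < η * P * h / γ
      ↔ X / (3 * C * h * γ * B) < b ^ 2 := by
    constructor
    · intro h'
      by_contra h''
      push_neg at h''
      have h4 := Real.rpow_le_rpow (by positivity) h'' (show (0:ℝ) ≤ 3/2 by norm_num)
      rw [hRb] at h4
      linarith
    · intro h'
      calc (X / (3 * C * h * γ * B)) ^ ((3:ℝ)/2)
          < (b ^ 2) ^ ((3:ℝ)/2) := Real.rpow_lt_rpow hQ.le h' (by norm_num)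
        _ = η * P * h / γ := hRb
  have e3 : X / (3 * C * h * γ * B) < b ^ 2 ↔ A < M := by
    rw [hAdef, hMdef, div_lt_div_iff₀ (by positivity) hX, div_lt_iff₀ (by positivity)]
    constructor <;> intro h' <;> nlinarith [h']
  exact e1.trans (e2.trans e3)

set_option maxHeartbeats 1000000 in
/-- When `A < M`, there is a feasible point whose value strictly exceeds the
local-computing-only optimal value. -/
lemma mec_construct (B T C σ2 γ η P h pstar b X M A L : ℝ)
    (hB : 0 < B) (hT : 0 < T) (hC : 0 < C) (hσ : 0 < σ2) (hγ : 0 < γ)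
    (hη : 0 < η) (hP : 0 < P) (hh : 0 < h) (hpstar0 : 0 ≤ pstar)
    (hb : 0 < b) (hgb : γ * b ^ 3 = η * P * h)
    (hXdef : X = (σ2 + pstar * h) * Real.log 2) (hX : 0 < X)
    (hMdef : M = B * h / X) (hM : 0 < M)
    (hAdef : A = 1 / (3 * C * γ * b ^ 2)) (hA : 0 < A)
    (hLdef : L = Real.logb 2 (1 + pstar * h / σ2))
    (hBL : B * L = (pstar + η * P * h) * M)
    (hAM : A < M) :
    ∃ τ₀ τ₁ e f : ℝ, 0 ≤ τ₀ ∧ 0 ≤ τ₁ ∧ 0 ≤ e ∧ 0 ≤ f ∧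
      τ₀ + τ₁ ≤ T ∧ e + T * γ * f ^ 3 ≤ τ₀ * η * P * h ∧
      T / C * b < B * τ₁ * Real.logb 2 (1 + e * h / (τ₁ * σ2)) + T * f / C := by
  have hηPh : (0:ℝ) < η * P * h := by positivity
  have hMA' : 0 < M - A := by linarith
  obtain ⟨c, hcdef⟩ : ∃ c : ℝ, c = pstar + η * P * h := ⟨_, rfl⟩
  have hc : 0 < c := by rw [hcdef]; positivity
  have ht2pos : 0 < T * (η * P * h) * (M - A) / (2 * c * M) :=
    div_pos (mul_pos (by positivity) hMA') (by positivity)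
  obtain ⟨t, htdef⟩ : ∃ t : ℝ, t = min (T / 2) (T * (η * P * h) * (M - A) / (2 * c * M)) :=
    ⟨_, rfl⟩
  have ht0 : 0 < t := htdef ▸ lt_min (by positivity) ht2pos
  have ht1 : t ≤ T / 2 := htdef ▸ min_le_left _ _
  have htmin : t ≤ T * (η * P * h) * (M - A) / (2 * c * M) := htdef ▸ min_le_right _ _
  have htc : t * c ≤ T * (η * P * h) * (M - A) / (2 * M) := by
    calc t * c ≤ T * (η * P * h) * (M - A) / (2 * c * M) * c :=
          mul_le_mul_of_nonneg_right htmin hc.le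
      _ = T * (η * P * h) * (M - A) / (2 * M) := by field_simp
  obtain ⟨δ, hδdef⟩ : ∃ δ : ℝ, δ = t * c / (T * γ * b ^ 2) := ⟨_, rfl⟩
  have hδ0 : 0 < δ := by rw [hδdef]; positivity
  have hδ1 : δ ≤ (M - A) * b / (2 * M) := by
    rw [hδdef, div_le_iff₀ (by positivity)]
    have heq : (M - A) * b / (2 * M) * (T * γ * b ^ 2)
        = T * (η * P * h) * (M - A) / (2 * M) := by
      rw [← hgb]; field_simp
    rw [heq]; exact htc
  have hδb : δ ≤ b / 2 := by
    have h4 : (M - A) * b / (2 * M) ≤ b / 2 := by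
      rw [div_le_div_iff₀ (by positivity) (by norm_num)]
      linarith [mul_pos hA hb]
    linarith
  obtain ⟨s, hsdef⟩ : ∃ s : ℝ, s = t * c / (T * γ) := ⟨_, rfl⟩
  have hs0 : 0 < s := by rw [hsdef]; positivity
  have hsδ : s = δ * b ^ 2 := by rw [hδdef, hsdef]; field_simp
  have hy0 : 0 < b ^ 3 - s := by
    have h4 : δ * b ^ 2 ≤ b / 2 * b ^ 2 :=
      mul_le_mul_of_nonneg_right hδb (sq_nonneg b)
    linarith [hsδ, h4, pow_pos hb 3]
  obtain ⟨u, hudef⟩ : ∃ u : ℝ, u = (b ^ 3 - s) ^ ((1:ℝ)/3) := ⟨_, rfl⟩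
  have hu0 : 0 < u := hudef ▸ Real.rpow_pos_of_pos hy0 _
  have hu3 : u ^ 3 = b ^ 3 - s := hudef ▸ cube_rpow_third hy0.le
  have hub : u ≤ b := by
    have h1 : u ^ 3 ≤ b ^ 3 := by rw [hu3]; linarith
    exact le_of_pow_le_pow_left₀ (by norm_num) hb.le h1
  have hul : b - δ ≤ u := by
    have h1 : (b - δ) ^ 3 ≤ u ^ 3 := by
      rw [hu3, hsδ]
      linarith [mul_nonneg (mul_nonneg hδ0.le (show (0:ℝ) ≤ 2 * b - δ by linarith))
        (show (0:ℝ) ≤ b - δ by linarith)]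
    exact le_of_pow_le_pow_left₀ (by norm_num) hu0.le h1
  have hbδ0 : 0 < b - δ := by linarith
  have hbu : b - u ≤ s / (3 * b * (b - δ)) := by
    have hden : 3 * b * (b - δ) ≤ b ^ 2 + b * u + u ^ 2 := by
      have h2 := mul_le_mul_of_nonneg_left hul hb.le
      have h3 := pow_le_pow_left₀ hbδ0.le hul 2
      linarith [h2, h3, sq_nonneg δ]
    have h1 : (b - u) * (3 * b * (b - δ)) ≤ s := by
      have h2 : (b - u) * (3 * b * (b - δ)) ≤ (b - u) * (b ^ 2 + b * u + u ^ 2) :=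
        mul_le_mul_of_nonneg_left hden (by linarith)
      linarith [h2, hu3]
    rw [le_div_iff₀ (by positivity)]
    exact h1
  have hBtL : B * t * L = t * c * M := by
    rw [hcdef]; linear_combination t * hBL
  have hkey2 : 1 < M * (3 * C * γ * b * (b - δ)) := by
    have hMδ : M * δ ≤ (M - A) * b / 2 := by
      have h4 := mul_le_mul_of_nonneg_left hδ1 hM.le
      have h5 : M * ((M - A) * b / (2 * M)) = (M - A) * b / 2 := by
        field_simp
      linarith [h4, h5.le, h5.ge]
    have h2 : A * b < M * (b - δ) := by
      linarith [mul_pos hMA' hb, hMδ]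
    have h3 : A * (3 * C * γ * b ^ 2) = 1 := by
      rw [hAdef]; field_simp
    have h4 := mul_lt_mul_of_pos_right h2 (show (0:ℝ) < 3 * C * γ * b by positivity)
    linarith [h4, h3]
  have h5 : 1 / (3 * C * γ * b * (b - δ)) < M := by
    rw [div_lt_iff₀ (by positivity)]
    linarith [hkey2]
  have h6 : T / C * (s / (3 * b * (b - δ))) = t * c * (1 / (3 * C * γ * b * (b - δ))) := by
    rw [hsdef]
    field_simp
  have h7 : T / C * (b - u) ≤ T / C * (s / (3 * b * (b - δ))) :=
    mul_le_mul_of_nonneg_left hbu (by positivity)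
  have h8 : t * c * (1 / (3 * C * γ * b * (b - δ))) < t * c * M :=
    mul_lt_mul_of_pos_left h5 (by positivity)
  have hvgt : T / C * b < B * t * L + T * u / C := by
    have h9 : T / C * b - (B * t * L + T * u / C) = T / C * (b - u) - t * c * M := by
      rw [hBtL]; ring
    linarith [h7, h8, h6, h9]
  refine ⟨T - t, t, t * pstar, u, by linarith, ht0.le, by positivity, hu0.le,
    by linarith, ?_, ?_⟩
  · have heq : t * pstar + T * γ * u ^ 3 = (T - t) * η * P * h := by
      rw [hu3, hsdef, hcdef]
      field_simp
      linear_combination T * hgb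
    linarith
  · have harg : t * pstar * h / (t * σ2) = pstar * h / σ2 := by
      rw [mul_assoc, mul_div_mul_left _ _ ht0.ne']
    rw [harg, ← hLdef]
    exact hvgt

set_option maxHeartbeats 1000000 in
/-- Proposition 1: threshold-based uplink-offloading activation condition for the
single-user wireless-powered MEC problem. `V` is the optimal value of the problem
`max B·τ₁·log₂(1 + e·h/(τ₁·σ²)) + T·f/C` subject to `τ₀ + τ₁ ≤ T` and
`e + T·γ·f³ ≤ τ₀·η·P·h` over nonnegative `τ₀, τ₁, e, f` (in Lean, division by zero
gives `0`, so the expression automatically obeys the convention that the offloading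
term vanishes when `τ₁ = 0`), and `V_loc = (T/C)·(η·P·h/γ)^{1/3}` is the optimal value
with local computing only. Then `V > V_loc` iff `P > thre(h)`, where
`thre(h) = (γ/(η·h))·(((σ² + p*·h)·ln 2)/(3·C·h·γ·B))^{3/2}` and `p*` is the unique
nonnegative root of `G`. -/
theorem offloading_activation_condition (B T C σ2 γ η P h : ℝ)
    (hB : 0 < B) (hT : 0 < T) (hC : 0 < C) (hσ : 0 < σ2) (hγ : 0 < γ)
    (hη : 0 < η) (hP : 0 < P) (hh : 0 < h)
    (pstar : ℝ) (hpstar0 : 0 ≤ pstar)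
    (hroot : Real.logb 2 (1 + pstar * h / σ2)
        - pstar * h / ((σ2 + pstar * h) * Real.log 2)
        - η * P * h ^ 2 / ((σ2 + pstar * h) * Real.log 2) = 0) :
    sSup {r : ℝ | ∃ τ₀ τ₁ e f : ℝ, 0 ≤ τ₀ ∧ 0 ≤ τ₁ ∧ 0 ≤ e ∧ 0 ≤ f ∧
        τ₀ + τ₁ ≤ T ∧ e + T * γ * f ^ 3 ≤ τ₀ * η * P * h ∧
        r = B * τ₁ * Real.logb 2 (1 + e * h / (τ₁ * σ2)) + T * f / C}
      > (T / C) * (η * P * h / γ) ^ ((1 : ℝ) / 3)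
    ↔ P > (γ / (η * h)) *
        (((σ2 + pstar * h) * Real.log 2) / (3 * C * h * γ * B)) ^ ((3 : ℝ) / 2) := by
  have hln2 : 0 < Real.log 2 := Real.log_pos one_lt_two
  have hb0 : (0:ℝ) < η * P * h / γ := by positivity
  obtain ⟨b, hbdef⟩ : ∃ b : ℝ, b = (η * P * h / γ) ^ ((1:ℝ)/3) := ⟨_, rfl⟩
  rw [← hbdef]
  have hb : 0 < b := hbdef ▸ Real.rpow_pos_of_pos hb0 _
  have hb3 : b ^ 3 = η * P * h / γ := hbdef ▸ cube_rpow_third hb0.le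
  have hgb : γ * b ^ 3 = η * P * h := by rw [hb3]; field_simp
  have hσp : 0 < σ2 + pstar * h := by positivity
  obtain ⟨X, hXdef⟩ : ∃ X : ℝ, X = (σ2 + pstar * h) * Real.log 2 := ⟨_, rfl⟩
  rw [← hXdef] at hroot ⊢
  have hX : 0 < X := by rw [hXdef]; positivity
  obtain ⟨M, hMdef⟩ : ∃ M : ℝ, M = B * h / X := ⟨_, rfl⟩
  have hM : 0 < M := by rw [hMdef]; positivity
  obtain ⟨A, hAdef⟩ : ∃ A : ℝ, A = 1 / (3 * C * γ * b ^ 2) := ⟨_, rfl⟩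
  have hA : 0 < A := by rw [hAdef]; positivity
  obtain ⟨L, hLdef⟩ : ∃ L : ℝ, L = Real.logb 2 (1 + pstar * h / σ2) := ⟨_, rfl⟩
  rw [← hLdef] at hroot
  have hBL : B * L = (pstar + η * P * h) * M := by
    have h1 : L = pstar * h / X + η * P * h ^ 2 / X := by linarith [hroot]
    rw [h1, hMdef]
    field_simp
  have hηPh : (0:ℝ) < η * P * h := by positivity
  have key := mec_key_bound B T C σ2 γ η P h pstar b X M A L hB hT hC hσ hγ hη hP hh
    hpstar0 hb hgb hXdef hX hMdef hM hAdef hLdef hBL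
  have hiff := mec_thre_iff B T C σ2 γ η P h pstar b X M A hB hT hC hσ hγ hη hP hh
    hpstar0 hbdef hb hXdef hX hMdef hM hAdef
  -- membership of the local-computing point
  have hVloc_mem : T / C * b ∈ {r : ℝ | ∃ τ₀ τ₁ e f : ℝ, 0 ≤ τ₀ ∧ 0 ≤ τ₁ ∧ 0 ≤ e ∧ 0 ≤ f ∧
      τ₀ + τ₁ ≤ T ∧ e + T * γ * f ^ 3 ≤ τ₀ * η * P * h ∧
      r = B * τ₁ * Real.logb 2 (1 + e * h / (τ₁ * σ2)) + T * f / C} := by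
    refine ⟨T, 0, 0, b, hT.le, le_refl 0, le_refl 0, hb.le, by linarith, ?_, ?_⟩
    · have h1 : (0:ℝ) + T * γ * b ^ 3 = T * η * P * h := by
        rw [hb3]; field_simp; ring
      linarith
    · simp only [zero_mul, mul_zero, zero_div, zero_add, add_zero, Real.logb_one]
      ring
  have hne : {r : ℝ | ∃ τ₀ τ₁ e f : ℝ, 0 ≤ τ₀ ∧ 0 ≤ τ₁ ∧ 0 ≤ e ∧ 0 ≤ f ∧
      τ₀ + τ₁ ≤ T ∧ e + T * γ * f ^ 3 ≤ τ₀ * η * P * h ∧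
      r = B * τ₁ * Real.logb 2 (1 + e * h / (τ₁ * σ2)) + T * f / C}.Nonempty :=
    ⟨_, hVloc_mem⟩
  have hbdd : BddAbove {r : ℝ | ∃ τ₀ τ₁ e f : ℝ, 0 ≤ τ₀ ∧ 0 ≤ τ₁ ∧ 0 ≤ e ∧ 0 ≤ f ∧
      τ₀ + τ₁ ≤ T ∧ e + T * γ * f ^ 3 ≤ τ₀ * η * P * h ∧
      r = B * τ₁ * Real.logb 2 (1 + e * h / (τ₁ * σ2)) + T * f / C} := by
    refine ⟨T / C * b + (T * (η * P * h) + T * (η * P * h)) * |M - A|, ?_⟩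
    rintro r ⟨τ₀, τ₁, e, f, hτ₀, hτ₁, he, hf, hsum, hcon, rfl⟩
    have hk := key τ₀ τ₁ e f hτ₀ hτ₁ he hf hsum hcon
    have h1 : τ₁ ≤ T := by linarith
    have h2 : e ≤ T * (η * P * h) := by
      have h3 : (0:ℝ) ≤ T * γ * f ^ 3 := by positivity
      have h4 := mul_le_mul_of_nonneg_right (show τ₀ ≤ T by linarith) hηPh.le
      linarith [hcon, h3, h4]
    have hF0 : 0 ≤ τ₁ * (η * P * h) + e := by positivity
    have hFle : τ₁ * (η * P * h) + e ≤ T * (η * P * h) + T * (η * P * h) := by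
      linarith [mul_le_mul_of_nonneg_right h1 hηPh.le, h2]
    have h3 : (τ₁ * (η * P * h) + e) * (M - A)
        ≤ (T * (η * P * h) + T * (η * P * h)) * |M - A| :=
      le_trans (mul_le_mul_of_nonneg_left (le_abs_self _) hF0)
        (mul_le_mul_of_nonneg_right hFle (abs_nonneg _))
    linarith
  refine Iff.trans ?_ hiff.symm
  constructor
  · -- forward: contrapositive
    intro hsup
    by_contra hnA
    push_neg at hnA
    have hMA : M ≤ A := hnA
    have hle : sSup {r : ℝ | ∃ τ₀ τ₁ e f : ℝ, 0 ≤ τ₀ ∧ 0 ≤ τ₁ ∧ 0 ≤ e ∧ 0 ≤ f ∧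
        τ₀ + τ₁ ≤ T ∧ e + T * γ * f ^ 3 ≤ τ₀ * η * P * h ∧
        r = B * τ₁ * Real.logb 2 (1 + e * h / (τ₁ * σ2)) + T * f / C} ≤ T / C * b := by
      apply csSup_le hne
      rintro r ⟨τ₀, τ₁, e, f, hτ₀, hτ₁, he, hf, hsum, hcon, rfl⟩
      have hk := key τ₀ τ₁ e f hτ₀ hτ₁ he hf hsum hcon
      have hF0 : 0 ≤ τ₁ * (η * P * h) + e := by positivity
      linarith [hk, mul_nonneg hF0 (show 0 ≤ A - M by linarith)]
    have : T / C * b < T / C * b := lt_of_lt_of_le hsup hle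
    exact absurd this (lt_irrefl _)
  · -- backward: construct a strictly better feasible point
    intro hAM
    obtain ⟨τ₀, τ₁, e, f, hτ₀, hτ₁, he, hf, hsum, hcon, hval⟩ :=
      mec_construct B T C σ2 γ η P h pstar b X M A L hB hT hC hσ hγ hη hP hh
        hpstar0 hb hgb hXdef hX hMdef hM hAdef hA hLdef hBL hAM
    calc T / C * b < B * τ₁ * Real.logb 2 (1 + e * h / (τ₁ * σ2)) + T * f / C := hval
      _ ≤ _ := le_csSup hbdd ⟨τ₀, τ₁, e, f, hτ₀, hτ₁, he, hf, hsum, hcon, rfl⟩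
end
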